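/- arXiv:0710.0260 — 2 statements merged into one kernel-verified Lean document; each statement's English description precedes it below -/
import Mathlib

section
/- For every R[Γ]-module V and every q ≥ 1, the inductively defined higher order invariants satisfy H_q^0(Γ,Σ,V) = {v ∈ V : J_q·v = 0}, i.e. H_q^0(Γ,Σ,V) = V^{I^q} ∩ V^{I_Σ}, where V^J denotes the set of v ∈ V annihilated by the ideal J. -/
/-- The augmentation map `R[Γ] → R`, `∑ a_γ γ ↦ ∑ a_γ`. -/
noncomputable def aug (R Γ : Type*) [CommRing R] [Group Γ] :
    MonoidAlgebra R Γ →ₐ[R] R :=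
  MonoidAlgebra.lift R R Γ 1

/-- The augmentation ideal `I = ker(aug)`, viewed as an `R`-submodule of `R[Γ]`. -/
noncomputable def augIdeal (R Γ : Type*) [CommRing R] [Group Γ] :
    Submodule R (MonoidAlgebra R Γ) :=
  (RingHom.ker (aug R Γ).toRingHom).restrictScalars R

/-- The augmentation ideal `I_Σ` of a subgroup `Σ ≤ Γ` (the augmentation ideal of `R[Σ]`,
viewed inside `R[Γ]`); as an `R`-module it is spanned by the elements `σ - 1`, `σ ∈ Σ`. -/
noncomputable def augIdealOf (R : Type*) {Γ : Type*} [CommRing R] [Group Γ] (S : Subgroup Γ) :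
    Submodule R (MonoidAlgebra R Γ) :=
  Submodule.span R {x | ∃ σ ∈ S, x = MonoidAlgebra.of R Γ σ - 1}

/-- The ideal `J_q = I^q + R[Γ]·I_Σ` of `A = R[Γ]`. -/
noncomputable def Jideal (R : Type*) {Γ : Type*} [CommRing R] [Group Γ] (S : Subgroup Γ)
    (q : ℕ) : Ideal (MonoidAlgebra R Γ) :=
  Submodule.span (MonoidAlgebra R Γ)
    ((augIdeal R Γ ^ q : Submodule R (MonoidAlgebra R Γ)) ∪
      (augIdealOf R S : Set (MonoidAlgebra R Γ)))

/-- The higher order invariants `H_q^0(Γ,Σ,V)`, defined inductively: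
`H_1^0(Γ,Σ,V) = V^Γ`, and `H_{q+1}^0(Γ,Σ,V)` consists of those `v` with
`(γ-1)v ∈ H_q^0(Γ,Σ,V)` for all `γ ∈ Γ` and `(σ-1)v = 0` for all `σ ∈ Σ`. -/
def Hord (R Γ : Type*) [CommRing R] [Group Γ] (S : Subgroup Γ) (V : Type*) [AddCommGroup V]
    [Module (MonoidAlgebra R Γ) V] : ℕ → Set V
  | 0 => Set.univ
  | 1 => {v | ∀ γ : Γ, MonoidAlgebra.of R Γ γ • v = v}
  | (q + 2) => {v | (∀ γ : Γ, (MonoidAlgebra.of R Γ γ - 1) • v ∈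
        Hord R Γ S V (q + 1)) ∧ ∀ σ ∈ S, (MonoidAlgebra.of R Γ σ - 1) • v = 0}

section Aux

variable (R : Type*) {Γ : Type*} [CommRing R] [Group Γ]
variable {V : Type*} [AddCommGroup V] [Module (MonoidAlgebra R Γ) V]

/-- The annihilator of `v` as an `R`-submodule of `R[Γ]`. -/
noncomputable def annR (v : V) : Submodule R (MonoidAlgebra R Γ) where
  carrier := {m | m • v = 0}
  add_mem' := by
    intro a b ha hb
    simp only [Set.mem_setOf_eq] at *
    rw [add_smul, ha, hb, add_zero]
  zero_mem' := by simp only [Set.mem_setOf_eq, zero_smul]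
  smul_mem' := by
    intro r m hm
    simp only [Set.mem_setOf_eq] at *
    rw [Algebra.smul_def, mul_smul, hm, smul_zero]

@[simp] lemma mem_annR (v : V) (m : MonoidAlgebra R Γ) : m ∈ annR R v ↔ m • v = 0 :=
  Iff.rfl

/-- The annihilator of `v` as an ideal of `R[Γ]`. -/
noncomputable def annA (v : V) : Ideal (MonoidAlgebra R Γ) where
  carrier := {m | m • v = 0}
  add_mem' := by
    intro a b ha hb
    simp only [Set.mem_setOf_eq] at *
    rw [add_smul, ha, hb, add_zero]
  zero_mem' := by simp only [Set.mem_setOf_eq, zero_smul]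
  smul_mem' := by
    intro a m hm
    simp only [Set.mem_setOf_eq] at *
    rw [smul_eq_mul, mul_smul, hm, smul_zero]

@[simp] lemma mem_annA (v : V) (m : MonoidAlgebra R Γ) : m ∈ annA R v ↔ m • v = 0 :=
  Iff.rfl

/-- For fixed `a`, the set of `b` with `(a * b) • v = 0`, as an `R`-submodule. -/
noncomputable def annMulR (a : MonoidAlgebra R Γ) (v : V) :
    Submodule R (MonoidAlgebra R Γ) where
  carrier := {b | (a * b) • v = 0}
  add_mem' := by
    intro x y hx hy
    simp only [Set.mem_setOf_eq] at *
    rw [mul_add, add_smul, hx, hy, add_zero]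
  zero_mem' := by simp only [Set.mem_setOf_eq, mul_zero, zero_smul]
  smul_mem' := by
    intro r b hb
    simp only [Set.mem_setOf_eq] at *
    rw [mul_smul_comm, Algebra.smul_def, mul_smul, hb, smul_zero]

lemma augIdeal_eq_span (R Γ : Type*) [CommRing R] [Group Γ] :
    augIdeal R Γ = Submodule.span R {x | ∃ γ : Γ, x = MonoidAlgebra.of R Γ γ - 1} := by
  apply le_antisymm
  · intro x hx
    have hx0 : aug R Γ x = 0 := hx
    have haug : aug R Γ x = x.coeff.sum fun _ b => b := by
      simp [aug, MonoidAlgebra.lift_apply]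
    have h1 : x.coeff.sum (fun γ r => r • (MonoidAlgebra.of R Γ γ)) = x := by
      simp only [MonoidAlgebra.of_apply, MonoidAlgebra.smul_single', mul_one]
      exact MonoidAlgebra.sum_coeff_single x
    have h2 : x.coeff.sum (fun γ r => r • (1 : MonoidAlgebra R Γ))
        = (x.coeff.sum fun _ b => b) • (1 : MonoidAlgebra R Γ) := by
      rw [Finsupp.sum, Finsupp.sum, Finset.sum_smul]
    have hx' : x = x.coeff.sum fun γ r => r • (MonoidAlgebra.of R Γ γ - 1) := by
      have hsub : x.coeff.sum (fun γ r => r • (MonoidAlgebra.of R Γ γ - 1))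
          = x.coeff.sum (fun γ r => r • (MonoidAlgebra.of R Γ γ)) -
            x.coeff.sum (fun γ r => r • (1 : MonoidAlgebra R Γ)) := by
        rw [← Finsupp.sum_sub]
        congr 1
        ext γ r
        rw [smul_sub]
      rw [hsub, h1, h2, ← haug, hx0, zero_smul, sub_zero]
    rw [hx']
    refine Submodule.finsuppSum_mem _ _ _ _ fun γ _ => ?_
    exact Submodule.smul_mem _ _ (Submodule.subset_span ⟨γ, rfl⟩)
  · rw [Submodule.span_le]
    rintro x ⟨γ, rfl⟩
    show aug R Γ _ = 0
    simp [aug]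

lemma of_sub_one_mem_augIdeal (R : Type*) {Γ : Type*} [CommRing R] [Group Γ] (γ : Γ) :
    MonoidAlgebra.of R Γ γ - 1 ∈ augIdeal R Γ := by
  show aug R Γ _ = 0
  simp [aug]

lemma ann_augIdealOf {S : Subgroup Γ} {v : V}
    (h : ∀ σ ∈ S, (MonoidAlgebra.of R Γ σ - 1) • v = 0) :
    ∀ m ∈ augIdealOf R S, m • v = 0 := by
  intro m hm
  have hle : augIdealOf R S ≤ annR R v := by
    rw [augIdealOf, Submodule.span_le]
    rintro x ⟨σ, hσ, rfl⟩
    exact h σ hσ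
  exact hle hm

lemma ann_augIdeal {v : V} (h : ∀ γ : Γ, (MonoidAlgebra.of R Γ γ - 1) • v = 0) :
    ∀ m ∈ augIdeal R Γ, m • v = 0 := by
  intro m hm
  have hle : augIdeal R Γ ≤ annR R v := by
    rw [augIdeal_eq_span, Submodule.span_le]
    rintro x ⟨γ, rfl⟩
    exact h γ
  exact hle hm

/-- The key identity used with normality: `(σ-1)(γ-1) = γ(γ⁻¹σγ - 1) - (σ-1)`. -/
lemma conj_identity (R : Type*) {Γ : Type*} [CommRing R] [Group Γ] (σ γ : Γ) :
    (MonoidAlgebra.of R Γ σ - 1) * (MonoidAlgebra.of R Γ γ - 1)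
      = MonoidAlgebra.of R Γ γ * (MonoidAlgebra.of R Γ (γ⁻¹ * σ * γ) - 1)
        - (MonoidAlgebra.of R Γ σ - 1) := by
  have h1 : MonoidAlgebra.of R Γ γ * MonoidAlgebra.of R Γ (γ⁻¹ * σ * γ)
      = MonoidAlgebra.of R Γ σ * MonoidAlgebra.of R Γ γ := by
    rw [← map_mul, ← map_mul]
    congr 1
    group
  have h2 : MonoidAlgebra.of R Γ γ * (MonoidAlgebra.of R Γ (γ⁻¹ * σ * γ) - 1)
      = MonoidAlgebra.of R Γ σ * MonoidAlgebra.of R Γ γ - MonoidAlgebra.of R Γ γ := by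
    rw [mul_sub, h1, mul_one]
  rw [h2]
  noncomm_ring

variable (Γ) in
lemma key (S : Subgroup Γ) [S.Normal] :
    ∀ q : ℕ, Hord R Γ S V (q + 1) =
      {v : V | ∀ m ∈ (augIdeal R Γ ^ (q + 1) : Submodule R (MonoidAlgebra R Γ)), m • v = 0} ∩
      {v : V | ∀ m ∈ augIdealOf R S, m • v = 0} := by
  intro q
  induction q with
  | zero =>
    ext v
    simp only [Hord, zero_add, pow_one, Set.mem_setOf_eq, Set.mem_inter_iff]
    constructor
    · intro h
      have hγ : ∀ γ : Γ, (MonoidAlgebra.of R Γ γ - 1) • v = 0 := by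
        intro γ
        rw [sub_smul, one_smul, h γ, sub_self]
      exact ⟨ann_augIdeal R hγ, ann_augIdealOf R fun σ _ => hγ σ⟩
    · rintro ⟨h1, _⟩ γ
      have := h1 _ (of_sub_one_mem_augIdeal R γ)
      rw [sub_smul, one_smul, sub_eq_zero] at this
      exact this
  | succ p ih =>
    ext v
    simp only [Hord, Set.mem_setOf_eq, Set.mem_inter_iff]
    constructor
    · rintro ⟨h1, h2⟩
      refine ⟨?_, ann_augIdealOf R h2⟩
      intro m hm
      rw [pow_succ] at hm
      refine Submodule.mul_induction_on hm (fun a ha b hb => ?_)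
        (fun x y hx hy => by rw [add_smul, hx, hy, add_zero])
      have hle : augIdeal R Γ ≤ annMulR R a v := by
        rw [augIdeal_eq_span, Submodule.span_le]
        rintro x ⟨γ, rfl⟩
        show (a * (MonoidAlgebra.of R Γ γ - 1)) • v = 0
        have hmem := h1 γ
        rw [ih] at hmem
        rw [mul_smul]
        exact hmem.1 a ha
      exact hle hb
    · rintro ⟨h1, h2⟩
      have hσv : ∀ σ ∈ S, (MonoidAlgebra.of R Γ σ - 1) • v = 0 := fun σ hσ =>
        h2 _ (Submodule.subset_span ⟨_, hσ, rfl⟩)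
      refine ⟨?_, hσv⟩
      intro γ
      rw [ih]
      constructor
      · intro m hm
        rw [← mul_smul]
        have : m * (MonoidAlgebra.of R Γ γ - 1)
            ∈ (augIdeal R Γ ^ (p + 1 + 1) : Submodule R (MonoidAlgebra R Γ)) := by
          rw [pow_succ]
          exact Submodule.mul_mem_mul hm (of_sub_one_mem_augIdeal R γ)
        exact h1 _ this
      · refine ann_augIdealOf R fun σ hσ => ?_
        have hσ' : γ⁻¹ * σ * γ ∈ S := Subgroup.Normal.conj_mem' ‹S.Normal› σ hσ γ
        calc (MonoidAlgebra.of R Γ σ - 1) • (MonoidAlgebra.of R Γ γ - 1) • v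
            = ((MonoidAlgebra.of R Γ σ - 1) * (MonoidAlgebra.of R Γ γ - 1)) • v :=
              (mul_smul _ _ _).symm
          _ = (MonoidAlgebra.of R Γ γ * (MonoidAlgebra.of R Γ (γ⁻¹ * σ * γ) - 1)) • v
              - (MonoidAlgebra.of R Γ σ - 1) • v := by rw [conj_identity, sub_smul]
          _ = MonoidAlgebra.of R Γ γ • (MonoidAlgebra.of R Γ (γ⁻¹ * σ * γ) - 1) • v
              - (MonoidAlgebra.of R Γ σ - 1) • v := by rw [mul_smul]
          _ = 0 := by rw [hσv _ hσ', smul_zero, hσv _ hσ, sub_zero]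

end Aux

/-- For every `R[Γ]`-module `V` and every `q ≥ 1`, the higher order invariants satisfy
`H_q^0(Γ,Σ,V) = {v ∈ V : J_q · v = 0} = V^{I^q} ∩ V^{I_Σ}`. -/
theorem Hord_eq_annihilator_Jideal (R Γ : Type*) [CommRing R] [Group Γ]
    (S : Subgroup Γ) [S.Normal] (V : Type*) [AddCommGroup V]
    [Module (MonoidAlgebra R Γ) V] (q : ℕ) (hq : 1 ≤ q) :
    Hord R Γ S V q = {v : V | ∀ m ∈ Jideal R S q, m • v = 0} ∧
    Hord R Γ S V q =
      {v : V | ∀ m ∈ (augIdeal R Γ ^ q : Submodule R (MonoidAlgebra R Γ)), m • v = 0} ∩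
      {v : V | ∀ m ∈ augIdealOf R S, m • v = 0} := by
  obtain ⟨p, rfl⟩ : ∃ p, q = p + 1 := ⟨q - 1, (Nat.succ_pred_eq_of_pos hq).symm⟩
  have hkey := key R Γ S (V := V) p
  refine ⟨?_, hkey⟩
  rw [hkey]
  ext v
  simp only [Set.mem_inter_iff, Set.mem_setOf_eq]
  constructor
  · rintro ⟨h1, h2⟩ m hm
    have hle : Jideal R S (p + 1) ≤ annA R v := by
      rw [Jideal, Submodule.span_le]
      rintro x (hx | hx)
      · exact h1 x hx
      · exact h2 x hx
    exact hle hm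
  · intro h
    constructor
    · intro m hm
      exact h m (Submodule.subset_span (Or.inl hm))
    · intro m hm
      exact h m (Submodule.subset_span (Or.inr hm))
end

section
/- Let Γ be a finite group, Σ an arbitrary normal subgroup of Γ, and V an R[Γ]-module such that the fixed module V^Γ contains no nontrivial |Γ|-torsion (this holds in particular when the order |Γ| is invertible in R). Then for every q ≥ 1 the natural inclusion H_q^0(Γ,Σ,V) ⊆ H_{q+1}^0(Γ,Σ,V) is an equality; hence all higher order invariants coincide with H_1^0(Γ,Σ,V). -/
/-- Let `Γ` be a finite group, `Σ` an arbitrary normal subgroup and `V` an `R[Γ]`-module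
such that the fixed module `V^Γ` has no nontrivial `|Γ|`-torsion (which holds in particular
when `|Γ|` is invertible in `R`).  Then for every `q ≥ 1` the natural inclusion
`H_q^0(Γ,Σ,V) ⊆ H_{q+1}^0(Γ,Σ,V)` is an equality, and hence all higher order invariants
coincide with `H_1^0(Γ,Σ,V)`. -/
theorem Hord_eq_of_finite (R Γ : Type*) [CommRing R] [Group Γ] [Fintype Γ]
    (S : Subgroup Γ) [S.Normal] (V : Type*) [AddCommGroup V]
    [Module (MonoidAlgebra R Γ) V]
    (htors : ∀ v : V, (∀ γ : Γ, MonoidAlgebra.of R Γ γ • v = v) →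
      (Fintype.card Γ) • v = 0 → v = 0) :
    (∀ q : ℕ, 1 ≤ q → Hord R Γ S V (q + 1) = Hord R Γ S V q) ∧
    (∀ q : ℕ, 1 ≤ q → Hord R Γ S V q = Hord R Γ S V 1) := by
  have key : Hord R Γ S V 2 = Hord R Γ S V 1 := by
    apply Set.Subset.antisymm
    · rintro v ⟨h1, _⟩
      have hsum : (∑ γ : Γ, (MonoidAlgebra.of R Γ γ - 1) • v)
          = (∑ γ : Γ, MonoidAlgebra.of R Γ γ • v) - (Fintype.card Γ) • v := by
        simp [sub_smul, Finset.sum_sub_distrib, Finset.card_univ]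
      have hu1 : ∀ δ : Γ, MonoidAlgebra.of R Γ δ • (∑ γ : Γ, (MonoidAlgebra.of R Γ γ - 1) • v)
          = ∑ γ : Γ, (MonoidAlgebra.of R Γ γ - 1) • v := by
        intro δ
        rw [Finset.smul_sum]
        exact Finset.sum_congr rfl fun γ _ => h1 γ δ
      have hre : ∀ γ₀ : Γ,
          MonoidAlgebra.of R Γ γ₀ • (∑ γ : Γ, MonoidAlgebra.of R Γ γ • v)
            = ∑ γ : Γ, MonoidAlgebra.of R Γ γ • v := by
        intro γ₀
        rw [Finset.smul_sum]
        have h2 : ∀ γ : Γ, MonoidAlgebra.of R Γ γ₀ • (MonoidAlgebra.of R Γ γ • v)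
            = MonoidAlgebra.of R Γ (γ₀ * γ) • v := by
          intro γ; rw [smul_smul, ← map_mul]
        simp_rw [h2]
        exact Fintype.sum_bijective _ (Group.mulLeft_bijective γ₀)
          _ _ (fun x => rfl)
      intro γ₀
      have hzero : (Fintype.card Γ) • ((MonoidAlgebra.of R Γ γ₀ - 1) • v) = 0 := by
        have e1 := hu1 γ₀
        rw [hsum, smul_sub, hre γ₀, smul_comm] at e1
        have e2 : (Fintype.card Γ) • (MonoidAlgebra.of R Γ γ₀ • v)
            = (Fintype.card Γ) • v := by
          have := congrArg (fun x => x - (∑ γ : Γ, MonoidAlgebra.of R Γ γ • v)) e1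
          simpa [sub_sub_cancel_left, neg_inj] using this
        rw [sub_smul, one_smul, smul_sub, e2, sub_self]
      have := htors _ (h1 γ₀) hzero
      rw [sub_smul, one_smul, sub_eq_zero] at this
      exact this
    · intro v hv
      refine ⟨fun γ => ?_, fun σ _ => ?_⟩
      · have h0 : (MonoidAlgebra.of R Γ γ - 1) • v = 0 := by
          rw [sub_smul, one_smul, hv γ, sub_self]
        rw [h0]; intro γ'; simp
      · rw [sub_smul, one_smul, hv σ, sub_self]
  have main : ∀ q : ℕ, 1 ≤ q → Hord R Γ S V (q + 1) = Hord R Γ S V q := by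
    intro q hq
    induction q with
    | zero => omega
    | succ n ih =>
      match n, ih with
      | 0, _ => exact key
      | (m+1), ih =>
        have ihm := ih (by omega)
        calc Hord R Γ S V (m + 1 + 1 + 1)
            = {v | (∀ γ : Γ, (MonoidAlgebra.of R Γ γ - 1) • v ∈ Hord R Γ S V (m + 2)) ∧
                ∀ σ ∈ S, (MonoidAlgebra.of R Γ σ - 1) • v = 0} := rfl
          _ = {v | (∀ γ : Γ, (MonoidAlgebra.of R Γ γ - 1) • v ∈ Hord R Γ S V (m + 1)) ∧
                ∀ σ ∈ S, (MonoidAlgebra.of R Γ σ - 1) • v = 0} := by rw [ihm]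
          _ = Hord R Γ S V (m + 1 + 1) := rfl
  refine ⟨main, ?_⟩
  intro q hq
  induction q with
  | zero => omega
  | succ n ih =>
    match n, ih with
    | 0, _ => rfl
    | (m+1), ih => rw [main (m+1) (by omega), ih (by omega)]
end
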